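/- Suppose n ≥ 7 and p₁, p₂, p₃, p₄ are nonnegative rationals satisfying (n-3)·p₁ + 3·p₂ = 1, p₁ + 2p₃ ≤ 1, and p₂ + 2p₄ ≤ 1. Then min((p₃+1)/2, (p₄+1)/2) ≤ (3n-1)/(4n). -/

import Mathlib

theorem stmt18 (n : ℕ) (hn : 7 ≤ n) (p₁ p₂ p₃ p₄ : ℚ)
    (h₁ : 0 ≤ p₁) (h₂ : 0 ≤ p₂) (h₃ : 0 ≤ p₃) (h₄ : 0 ≤ p₄)
    (e₁ : ((n : ℚ) - 3) * p₁ + 3 * p₂ = 1)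
    (e₂ : p₁ + 2 * p₃ ≤ 1) (e₃ : p₂ + 2 * p₄ ≤ 1) :
    min ((p₃ + 1) / 2) ((p₄ + 1) / 2) ≤ (3 * (n : ℚ) - 1) / (4 * (n : ℚ)) := by
  have hn7 : (7 : ℚ) ≤ (n : ℚ) := by exact_mod_cast hn
  have hnpos : (0 : ℚ) < (n : ℚ) := by linarith
  by_cases h : 1 / (n : ℚ) ≤ p₁
  · apply le_trans (min_le_left _ _)
    rw [div_le_div_iff₀ (by norm_num) (by linarith)]
    have : 1 / (n : ℚ) * (n : ℚ) = 1 := by field_simp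
    nlinarith
  · push_neg at h
    have hp2 : 1 / (n : ℚ) ≤ p₂ := by
      by_contra hc
      push_neg at hc
      have h1 : ((n : ℚ) - 3) * p₁ ≤ ((n : ℚ) - 3) * (1 / n) := by
        apply mul_le_mul_of_nonneg_left (le_of_lt h) (by linarith)
      have h2 : (3 : ℚ) * p₂ < 3 * (1 / n) := by linarith
      have : ((n : ℚ) - 3) * (1 / n) + 3 * (1 / n) = 1 := by field_simp; ring
      linarith
    apply le_trans (min_le_right _ _)
    rw [div_le_div_iff₀ (by norm_num) (by linarith)]
    have : 1 / (n : ℚ) * (n : ℚ) = 1 := by field_simp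
    nlinarith
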